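/- In the acyclic network setting, the map Φ : D → [0,∞)^J defined by Φ_j(y) = Σ_{k∈C(j)} ρ_{k,j}[H_k(y_j) - H_k(min_{i∈S(k|j)} y_i)]⁺ is surjective: for every w ∈ [0,∞)^J there exists y ∈ D with Φ(y) = w. -/

import Mathlib

open scoped Classical

/-- Stations visited by class `k` strictly before station `j` along its route. -/
def priorStations {J K : ℕ} (path : Fin K → List (Fin J)) (k : Fin K) (j : Fin J) :
    Finset (Fin J) :=
  ((path k).takeWhile (fun i => i ≠ j)).toFinset

/-- The map `Φ`: the minimum over the empty set is interpreted as `+∞`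
and `H k (+∞) = 0` (bounded support above). -/
noncomputable def PhiNet {J K : ℕ} (path : Fin K → List (Fin J))
    (ρ : Fin K → Fin J → ℝ) (H : Fin K → ℝ → ℝ) (y : Fin J → ℝ) : Fin J → ℝ :=
  fun j => ∑ k ∈ Finset.univ.filter (fun k => j ∈ path k),
    ρ k j * max (H k (y j) -
      (if h : (priorStations path k j).Nonempty
        then H k ((priorStations path k j).inf' h y) else 0)) 0

/-- `π ∈ Π`: for every `m`, the station `π m` can be reached through the
stations `π 0, …, π (m-1)`, i.e. some class visits `π m` with all of its
prior stations among `π 0, …, π (m-1)`. -/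
def AdmissiblePerm {J K : ℕ} (path : Fin K → List (Fin J)) (π : Equiv.Perm (Fin J)) : Prop :=
  ∀ m : Fin J, ∃ k : Fin K, π m ∈ path k ∧
    ∀ i ∈ priorStations path k (π m), ∃ m' : Fin J, m' < m ∧ π m' = i

/-- The set `D^π` of (3.12): the coordinates are ordered along `π` and
`y (π m) ≤ max_{k ∈ K_{m-1}^π(π m)} y_k^*`. -/
def Dpi {J K : ℕ} (path : Fin K → List (Fin J)) (ystar : Fin K → ℝ)
    (π : Equiv.Perm (Fin J)) : Set (Fin J → ℝ) :=
  {y | (∀ m m' : Fin J, m ≤ m' → y (π m') ≤ y (π m)) ∧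
    ∀ m : Fin J, ∃ k : Fin K,
      (π m ∈ path k ∧ ∀ i ∈ priorStations path k (π m), ∃ m' : Fin J, m' < m ∧ π m' = i) ∧
      y (π m) ≤ ystar k}

/-- The set `D = ⋃_{π ∈ Π} D^π` of (3.13). -/
def Dset {J K : ℕ} (path : Fin K → List (Fin J)) (ystar : Fin K → ℝ) : Set (Fin J → ℝ) :=
  ⋃ π ∈ {π : Equiv.Perm (Fin J) | AdmissiblePerm path π}, Dpi path ystar π


/-! ### Auxiliary definitions and lemmas for the proof -/

/-- The value `H k` of the minimum over the prior stations (`0` if there are none). -/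
noncomputable def cval {J K : ℕ} (path : Fin K → List (Fin J)) (H : Fin K → ℝ → ℝ)
    (y : Fin J → ℝ) (k : Fin K) (j : Fin J) : ℝ :=
  if h : (priorStations path k j).Nonempty then H k ((priorStations path k j).inf' h y) else 0

/-- Classes visiting `j` all of whose prior stations lie in `L`. -/
noncomputable def avail {J K : ℕ} (path : Fin K → List (Fin J)) (L : List (Fin J))
    (j : Fin J) : Finset (Fin K) :=
  Finset.univ.filter (fun k => j ∈ path k ∧ ∀ i ∈ priorStations path k j, i ∈ L)

lemma mem_avail {J K : ℕ} {path : Fin K → List (Fin J)} {L : List (Fin J)} {j : Fin J}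
    {k : Fin K} :
    k ∈ avail path L j ↔ j ∈ path k ∧ ∀ i ∈ priorStations path k j, i ∈ L := by
  simp [avail]

lemma cval_of_nonempty {J K : ℕ} (path : Fin K → List (Fin J)) (H : Fin K → ℝ → ℝ)
    (y : Fin J → ℝ) (k : Fin K) (j : Fin J) (h : (priorStations path k j).Nonempty) :
    cval path H y k j = H k ((priorStations path k j).inf' h y) := dif_pos h

lemma cval_nonneg {J K : ℕ} (path : Fin K → List (Fin J)) (H : Fin K → ℝ → ℝ)
    (y : Fin J → ℝ) (k : Fin K) (j : Fin J) (hnn : ∀ k y, 0 ≤ H k y) :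
    0 ≤ cval path H y k j := by
  unfold cval; split
  · exact hnn _ _
  · exact le_refl 0

lemma cval_congr {J K : ℕ} (path : Fin K → List (Fin J)) (H : Fin K → ℝ → ℝ)
    {y1 y2 : Fin J → ℝ} (k : Fin K) (j : Fin J)
    (h : ∀ i ∈ priorStations path k j, y1 i = y2 i) :
    cval path H y1 k j = cval path H y2 k j := by
  unfold cval
  by_cases hne : (priorStations path k j).Nonempty
  · rw [dif_pos hne, dif_pos hne]
    exact congrArg (H k) (Finset.inf'_congr hne rfl h)
  · rw [dif_neg hne, dif_neg hne]

lemma mem_prior_ne {J K : ℕ} (path : Fin K → List (Fin J)) (k : Fin K) {i j : Fin J}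
    (h : i ∈ priorStations path k j) : i ≠ j := by
  have := List.mem_takeWhile_imp (List.mem_toFinset.mp h)
  simpa using this

/-- One-dimensional solvability: a continuous function blowing up at `-∞` attains any
value which dominates its value at some point `c`, at a point `≤ c`. -/
lemma exists_sol {g : ℝ → ℝ} (hc : Continuous g)
    (ht : Filter.Tendsto g Filter.atBot Filter.atTop) {c wv : ℝ} (hw : g c ≤ wv) :
    ∃ t, t ≤ c ∧ g t = wv := by
  obtain ⟨a₀, ha₀⟩ := Filter.eventually_atBot.mp (ht.eventually (Filter.eventually_ge_atTop wv))
  have h1 : min a₀ c ≤ c := min_le_right _ _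
  have h2 : wv ≤ g (min a₀ c) := ha₀ _ (min_le_left _ _)
  obtain ⟨t, htmem, htval⟩ := intermediate_value_Icc' h1 hc.continuousOn ⟨hw, h2⟩
  exact ⟨t, htmem.2, htval⟩

/-- If a list contains an element not satisfying `Q`, it contains a first such element. -/
lemma takeWhile_first {α : Type*} [DecidableEq α] (Q : α → Prop) [DecidablePred Q] :
    ∀ l : List α, (∃ x ∈ l, ¬ Q x) →
      ∃ j, j ∈ l ∧ ¬ Q j ∧ ∀ i ∈ l.takeWhile (fun x => x ≠ j), Q i := by
  intro l
  induction l with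
  | nil => rintro ⟨x, hx, -⟩; exact absurd hx List.not_mem_nil
  | cons a tl ih =>
    rintro ⟨x, hx, hqx⟩
    by_cases hqa : Q a
    · have hxtl : x ∈ tl := by
        rcases List.mem_cons.mp hx with h | h
        · exact absurd (h ▸ hqa) hqx
        · exact h
      obtain ⟨j, hjmem, hqj, hall⟩ := ih ⟨x, hxtl, hqx⟩
      have haj : a ≠ j := fun e => hqj (e ▸ hqa)
      refine ⟨j, List.mem_cons_of_mem _ hjmem, hqj, ?_⟩
      intro i hi
      rw [List.takeWhile_cons, if_pos (by simpa using haj)] at hi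
      rcases List.mem_cons.mp hi with h | h
      · exact h ▸ hqa
      · exact hall i h
    · refine ⟨a, List.mem_cons_self, hqa, ?_⟩
      intro i hi
      rw [List.takeWhile_cons, if_neg (by simp)] at hi
      exact absurd hi List.not_mem_nil

theorem stmt11
    {J K : ℕ} (hJ : 0 < J)
    (path : Fin K → List (Fin J))
    (hnodup : ∀ k, (path k).Nodup) (hne : ∀ k, path k ≠ [])
    (hcover : ∀ j : Fin J, ∃ k, j ∈ path k)
    (hconn : ∀ j j' : Fin J,
      Relation.ReflTransGen (fun a b => ∃ k, a ∈ path k ∧ b ∈ path k) j j')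
    (ρ : Fin K → Fin J → ℝ) (hρ : ∀ j k, j ∈ path k → 0 < ρ k j)
    (hρsum : ∀ j : Fin J, ∑ k ∈ Finset.univ.filter (fun k => j ∈ path k), ρ k j = 1)
    (H : Fin K → ℝ → ℝ) (ystar : Fin K → ℝ)
    (hcont : ∀ k, Continuous (H k))
    (hanti : ∀ k, Antitone (H k))
    (hstrict : ∀ k, StrictAntiOn (H k) (Set.Iic (ystar k)))
    (hzero : ∀ k, ∀ y, ystar k ≤ y → H k y = 0)
    (hnonneg : ∀ k y, 0 ≤ H k y)
    (hinf : ∀ k, Filter.Tendsto (H k) Filter.atBot Filter.atTop)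
    (w : Fin J → ℝ) (hw : ∀ j, 0 ≤ w j) :
    ∃ y ∈ Dset path ystar, PhiNet path ρ H y = w := by

  classical
  -- Main induction: we build a list `L` of placed stations (largest value first)
  -- together with values `y`.
  have main : ∀ n : ℕ, n ≤ J → ∃ (L : List (Fin J)) (y : Fin J → ℝ),
      L.length = n ∧ L.Nodup ∧
      (∀ (m m' : ℕ) (hm : m < L.length) (hm' : m' < L.length), m ≤ m' → y L[m'] ≤ y L[m]) ∧
      (∀ (m : ℕ) (hm : m < L.length), ∃ k, L[m] ∈ path k ∧
        (∀ i ∈ priorStations path k L[m],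
          ∃ (m' : ℕ) (hm' : m' < L.length), m' < m ∧ L[m'] = i) ∧
        y L[m] ≤ ystar k) ∧
      (∀ (m : ℕ) (hm : m < L.length),
        (∑ k ∈ avail path (L.take m) L[m],
          ρ k L[m] * max (H k (y L[m]) - cval path H y k L[m]) 0) = w L[m]) ∧
      (∀ (hL : L ≠ []) (j : Fin J), j ∉ L →
        (∑ k ∈ avail path L j,
          ρ k j * max (H k (y (L.getLast hL)) - cval path H y k j) 0) ≤ w j) := by
    intro n
    induction n with
    | zero =>
      intro _
      refine ⟨[], fun _ => 0, rfl, List.nodup_nil, ?_, ?_, ?_, ?_⟩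
      · intro m m' hm hm'; simp at hm
      · intro m hm; simp at hm
      · intro m hm; simp at hm
      · intro hL; simp at hL
    | succ n ih =>
      intro hn
      obtain ⟨L, y, hlen, hnd, hord, hwit, hval, hinv⟩ := ih (Nat.le_of_succ_le hn)
      -- an unplaced station exists
      have hunpl : ∃ j : Fin J, j ∉ L := by
        by_contra hcon
        push_neg at hcon
        have h1 : (Finset.univ : Finset (Fin J)).card ≤ L.toFinset.card :=
          Finset.card_le_card fun x _ => List.mem_toFinset.mpr (hcon x)
        have h2 : L.toFinset.card ≤ L.length := L.toFinset_card_le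
        rw [Finset.card_univ, Fintype.card_fin] at h1
        omega
      -- a reachable unplaced station exists
      obtain ⟨j₀, hj₀⟩ := hunpl
      obtain ⟨k₀, hk₀⟩ := hcover j₀
      obtain ⟨j₁, hj₁p, hj₁L, hj₁pri⟩ := takeWhile_first (fun x => x ∈ L) (path k₀) ⟨j₀, hk₀, hj₀⟩
      have hk₀avail : k₀ ∈ avail path L j₁ :=
        mem_avail.mpr ⟨hj₁p, fun i hi => hj₁pri i (List.mem_toFinset.mp hi)⟩
      -- for every reachable unplaced station, solve the one-dimensional equation
      have hsol : ∀ j : Fin J, ∃ t : ℝ,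
          (j ∉ L ∧ (avail path L j).Nonempty) →
            ((∑ k ∈ avail path L j, ρ k j * max (H k t - cval path H y k j) 0) = w j ∧
            (∀ hL : L ≠ [], t ≤ y (L.getLast hL)) ∧
            ∃ k ∈ avail path L j, t ≤ ystar k) := by
        intro j
        by_cases hcond : j ∉ L ∧ (avail path L j).Nonempty
        swap
        · exact ⟨0, fun h => absurd h hcond⟩
        obtain ⟨hjL, hne'⟩ := hcond
        obtain ⟨kb, hkb, hkbmax⟩ := Finset.exists_max_image (avail path L j) ystar hne'
        have hGcont : Continuous
            (fun s => ∑ k ∈ avail path L j, ρ k j * max (H k s - cval path H y k j) 0) :=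
          continuous_finset_sum _ fun k _ =>
            continuous_const.mul (((hcont k).sub continuous_const).max continuous_const)
        have hGb : (∑ k ∈ avail path L j,
            ρ k j * max (H k (ystar kb) - cval path H y k j) 0) = 0 := by
          refine Finset.sum_eq_zero fun k hk => ?_
          rw [hzero k _ (hkbmax k hk),
            max_eq_right (by linarith [cval_nonneg path H y k j hnonneg]), mul_zero]
        have hGtop : Filter.Tendsto
            (fun s => ∑ k ∈ avail path L j, ρ k j * max (H k s - cval path H y k j) 0)
            Filter.atBot Filter.atTop := by
          obtain ⟨k₂, hk₂⟩ := hne'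
          have hk₂path : j ∈ path k₂ := (mem_avail.mp hk₂).1
          have hlow : ∀ s : ℝ, ρ k₂ j * (H k₂ s + -(cval path H y k₂ j)) ≤
              ∑ k ∈ avail path L j, ρ k j * max (H k s - cval path H y k j) 0 := by
            intro s
            have h1 : ρ k₂ j * (H k₂ s + -(cval path H y k₂ j)) ≤
                ρ k₂ j * max (H k₂ s - cval path H y k₂ j) 0 := by
              rw [← sub_eq_add_neg]
              exact mul_le_mul_of_nonneg_left (le_max_left _ _) (hρ j k₂ hk₂path).le
            refine h1.trans (Finset.single_le_sum
              (f := fun k => ρ k j * max (H k s - cval path H y k j) 0)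
              (fun k hk => mul_nonneg (hρ j k (mem_avail.mp hk).1).le (le_max_right _ _)) hk₂)
          exact Filter.tendsto_atTop_mono hlow
            ((Filter.tendsto_atTop_add_const_right _ _ (hinf k₂)).const_mul_atTop
              (hρ j k₂ hk₂path))
        set c : ℝ := if hL : L = [] then ystar kb else min (y (L.getLast hL)) (ystar kb) with hc
        have hGc : (∑ k ∈ avail path L j, ρ k j * max (H k c - cval path H y k j) 0) ≤ w j := by
          by_cases hL : L = []
          · have hcb : c = ystar kb := by rw [hc, dif_pos hL]
            rw [hcb, hGb]; exact hw j
          · have hcb : c = min (y (L.getLast hL)) (ystar kb) := by rw [hc, dif_neg hL]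
            rcases min_cases (y (L.getLast hL)) (ystar kb) with ⟨he, -⟩ | ⟨he, -⟩
            · rw [hcb, he]; exact hinv hL j hjL
            · rw [hcb, he, hGb]; exact hw j
        obtain ⟨tt, htc, htG⟩ := exists_sol hGcont hGtop hGc
        refine ⟨tt, fun _ => ⟨htG, ?_, kb, hkb, ?_⟩⟩
        · intro hL
          have : c ≤ y (L.getLast hL) := by rw [hc, dif_neg hL]; exact min_le_left _ _
          exact htc.trans this
        · have hcy : c ≤ ystar kb := by
            by_cases hL : L = []
            · rw [hc, dif_pos hL]
            · rw [hc, dif_neg hL]; exact min_le_right _ _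
          exact htc.trans hcy
      choose t ht using hsol
      -- pick the reachable station with the largest solution
      have hj₁mem : j₁ ∈ Finset.univ.filter
          (fun j : Fin J => j ∉ L ∧ (avail path L j).Nonempty) := by
        simp only [Finset.mem_filter, Finset.mem_univ, true_and]
        exact ⟨hj₁L, ⟨k₀, hk₀avail⟩⟩
      obtain ⟨js, hjsR, hjsmax⟩ := Finset.exists_max_image
        (Finset.univ.filter (fun j : Fin J => j ∉ L ∧ (avail path L j).Nonempty)) t
        ⟨j₁, hj₁mem⟩
      have hjs' : js ∉ L ∧ (avail path L js).Nonempty := by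
        simpa using hjsR
      have hjsL : js ∉ L := hjs'.1
      obtain ⟨hGjs, hprev, kw, hkw, hkwb⟩ := ht js hjs'
      set y' : Fin J → ℝ := Function.update y js (t js) with hy'def
      have hyjs : y' js = t js := Function.update_self _ _ _
      have hyL : ∀ i ∈ L, y' i = y i := by
        intro i hi
        refine Function.update_of_ne ?_ _ _
        rintro rfl
        exact hjsL hi
      have hts_all : ∀ (m : ℕ) (hm : m < L.length), t js ≤ y L[m] := by
        intro m hm
        have hLne : L ≠ [] := by intro e; rw [e] at hm; simp at hm
        have h1 : t js ≤ y (L.getLast hLne) := hprev hLne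
        have h2 : y (L.getLast hLne) ≤ y L[m] := by
          rw [List.getLast_eq_getElem hLne]
          exact hord m (L.length - 1) hm (by omega) (by omega)
        exact h1.trans h2
      have hlen' : (L ++ [js]).length = n + 1 := by simp [hlen]
      have hgetN : ∀ hh : L.length < (L ++ [js]).length, (L ++ [js])[L.length]'hh = js :=
        fun hh => List.getElem_concat_length rfl _
      refine ⟨L ++ [js], y', hlen', ?_, ?_, ?_, ?_, ?_⟩
      · simp [List.nodup_append, hnd, hjsL]
        rintro a ha rfl; exact hjsL ha
      · -- ordering
        intro m m' hm hm' hle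
        have hm'1 : m' < L.length + 1 := by simpa using hm'
        rcases Nat.lt_succ_iff_lt_or_eq.mp hm'1 with h | h
        · have hmL : m < L.length := lt_of_le_of_lt hle h
          rw [List.getElem_append_left h, List.getElem_append_left hmL,
            hyL _ (List.getElem_mem h), hyL _ (List.getElem_mem hmL)]
          exact hord m m' hmL h hle
        · subst h
          rw [hgetN hm', hyjs]
          rcases Nat.lt_succ_iff_lt_or_eq.mp (by omega : m < L.length + 1) with h2 | h2
          · rw [List.getElem_append_left h2, hyL _ (List.getElem_mem h2)]
            exact hts_all m h2
          · subst h2; rw [hgetN hm', hyjs]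
      · -- witnesses
        intro m hm
        have hm1 : m < L.length + 1 := by simpa using hm
        rcases Nat.lt_succ_iff_lt_or_eq.mp hm1 with h | h
        · obtain ⟨k, hk1, hk2, hk3⟩ := hwit m h
          have e1 : (L ++ [js])[m]'hm = L[m] := List.getElem_append_left h
          rw [e1]
          refine ⟨k, hk1, ?_, by rw [hyL _ (List.getElem_mem h)]; exact hk3⟩
          intro i hi
          obtain ⟨m', hm', hlt, he⟩ := hk2 i hi
          exact ⟨m', by simp; omega, hlt, by rw [List.getElem_append_left hm']; exact he⟩
        · subst h
          rw [hgetN hm]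
          obtain ⟨hkwp, hkwpri⟩ := mem_avail.mp hkw
          refine ⟨kw, hkwp, ?_, by rw [hyjs]; exact hkwb⟩
          intro i hi
          obtain ⟨m', hm', he⟩ := List.getElem_of_mem (hkwpri i hi)
          exact ⟨m', by simp; omega, hm', by rw [List.getElem_append_left hm']; exact he⟩
      · -- values achieved
        intro m hm
        have hm1 : m < L.length + 1 := by simpa using hm
        rcases Nat.lt_succ_iff_lt_or_eq.mp hm1 with h | h
        · have e1 : (L ++ [js])[m]'hm = L[m] := List.getElem_append_left h
          have e2 : (L ++ [js]).take m = L.take m := List.take_append_of_le_length h.le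
          rw [e1, e2, hyL _ (List.getElem_mem h)]
          refine Eq.trans (Finset.sum_congr rfl fun k hk => ?_) (hval m h)
          obtain ⟨-, hkpri⟩ := mem_avail.mp hk
          rw [cval_congr path H k L[m] (fun i hi => hyL i (List.take_subset _ _ (hkpri i hi)))]
        · subst h
          have e2 : (L ++ [js]).take L.length = L := List.take_left ..
          rw [hgetN hm, e2, hyjs]
          refine Eq.trans (Finset.sum_congr rfl fun k hk => ?_) hGjs
          obtain ⟨-, hkpri⟩ := mem_avail.mp hk
          rw [cval_congr path H k js (fun i hi => hyL i (hkpri i hi))]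
      · -- the invariant
        intro hL' j hjL'
        have hjL : j ∉ L := fun h => hjL' (List.mem_append_left _ h)
        have hglast : (L ++ [js]).getLast hL' = js := List.getLast_concat
        rw [hglast, hyjs]
        have hsub : avail path L j ⊆ avail path (L ++ [js]) j := by
          intro k hk
          obtain ⟨h1, h2⟩ := mem_avail.mp hk
          exact mem_avail.mpr ⟨h1, fun i hi => List.mem_append_left _ (h2 i hi)⟩
        have hbound : (∑ k ∈ avail path (L ++ [js]) j,
              ρ k j * max (H k (t js) - cval path H y' k j) 0) ≤
            ∑ k ∈ avail path (L ++ [js]) j,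
              (if k ∈ avail path L j then
                ρ k j * max (H k (t j) - cval path H y k j) 0 else 0) := by
          refine Finset.sum_le_sum fun k hk => ?_
          by_cases hkL : k ∈ avail path L j
          · obtain ⟨hkpath, hkpri⟩ := mem_avail.mp hkL
            have hcv : cval path H y' k j = cval path H y k j :=
              cval_congr path H k j fun i hi => hyL i (hkpri i hi)
            rw [if_pos hkL, hcv]
            have hjR2 : j ∈ Finset.univ.filter
                (fun j : Fin J => j ∉ L ∧ (avail path L j).Nonempty) := by
              simp only [Finset.mem_filter, Finset.mem_univ, true_and]
              exact ⟨hjL, ⟨k, hkL⟩⟩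
            have h1 : H k (t js) ≤ H k (t j) := hanti k (hjsmax j hjR2)
            exact mul_le_mul_of_nonneg_left (max_le_max (sub_le_sub_right h1 _) le_rfl)
              (hρ j k hkpath).le
          · rw [if_neg hkL]
            obtain ⟨hkpath, hkpri'⟩ := mem_avail.mp hk
            have hex : ∃ i ∈ priorStations path k j, i ∉ L := by
              by_contra hcon
              push_neg at hcon
              exact hkL (mem_avail.mpr ⟨hkpath, hcon⟩)
            obtain ⟨i, hi, hiL⟩ := hex
            have hij : i = js := by
              rcases List.mem_append.mp (hkpri' i hi) with h | h
              · exact absurd h hiL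
              · simpa using h
            have hpne : (priorStations path k j).Nonempty := ⟨i, hi⟩
            have hle : (priorStations path k j).inf' hpne y' ≤ t js := by
              have h2 : (priorStations path k j).inf' hpne y' ≤ y' i := Finset.inf'_le y' hi
              have h3 : y' i = t js := by rw [hij, hyjs]
              exact h2.trans_eq h3
            have h3 : H k (t js) - cval path H y' k j ≤ 0 := by
              rw [cval_of_nonempty path H y' k j hpne]
              have := hanti k hle
              linarith
            rw [max_eq_right h3, mul_zero]
        have heval : (∑ k ∈ avail path (L ++ [js]) j,
              (if k ∈ avail path L j then
                ρ k j * max (H k (t j) - cval path H y k j) 0 else 0)) =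
            ∑ k ∈ avail path L j, ρ k j * max (H k (t j) - cval path H y k j) 0 := by
          rw [Finset.sum_ite_mem]
          rw [Finset.inter_eq_right.mpr hsub]
        refine hbound.trans ?_
        rw [heval]
        by_cases hner : (avail path L j).Nonempty
        · exact le_of_eq (ht j ⟨hjL, hner⟩).1
        · rw [Finset.not_nonempty_iff_eq_empty.mp hner, Finset.sum_empty]
          exact hw j
  -- Assemble the final data
  obtain ⟨L, y, hlen, hnd, hord, hwit, hval, -⟩ := main J le_rfl
  have hmemL : ∀ x : Fin J, x ∈ L := by
    have hcard : L.toFinset = Finset.univ :=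
      Finset.eq_univ_of_card _ (by rw [List.toFinset_card_of_nodup hnd, hlen, Fintype.card_fin])
    intro x
    rw [← List.mem_toFinset, hcard]
    exact Finset.mem_univ x
  have hlt : ∀ m : Fin J, (m : ℕ) < L.length := fun m => by rw [hlen]; exact m.isLt
  have hfinj : Function.Injective (fun m : Fin J => L[(m : ℕ)]'(hlt m)) := by
    intro a b hab
    have h1 : L.get ⟨(a : ℕ), hlt a⟩ = L.get ⟨(b : ℕ), hlt b⟩ := by
      simpa [List.get_eq_getElem] using hab
    have h2 := List.nodup_iff_injective_get.mp hnd h1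
    have h3 : (a : ℕ) = (b : ℕ) := by simpa using h2
    exact Fin.ext h3
  set π : Equiv.Perm (Fin J) :=
    Equiv.ofBijective _ (Finite.injective_iff_bijective.mp hfinj) with hπdef
  have hπ : ∀ m : Fin J, π m = L[(m : ℕ)]'(hlt m) := fun m => rfl
  refine ⟨y, ?_, ?_⟩
  · -- y ∈ Dset
    refine Set.mem_biUnion (show AdmissiblePerm path π from ?_) (show y ∈ Dpi path ystar π from ?_)
    · intro m
      obtain ⟨k, h1, h2, -⟩ := hwit m (hlt m)
      refine ⟨k, by rw [hπ m]; exact h1, ?_⟩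
      intro i hi
      rw [hπ m] at hi
      obtain ⟨m', hm', hm'lt, he⟩ := h2 i hi
      refine ⟨⟨m', by omega⟩, by simpa [Fin.lt_def] using hm'lt, ?_⟩
      rw [hπ]
      exact he
    · constructor
      · intro m m' hmm'
        rw [hπ m, hπ m']
        exact hord m m' (hlt m) (hlt m') hmm'
      · intro m
        obtain ⟨k, h1, h2, h3⟩ := hwit m (hlt m)
        refine ⟨k, ⟨by rw [hπ m]; exact h1, ?_⟩, by rw [hπ m]; exact h3⟩
        intro i hi
        rw [hπ m] at hi
        obtain ⟨m', hm', hm'lt, he⟩ := h2 i hi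
        refine ⟨⟨m', by omega⟩, by simpa [Fin.lt_def] using hm'lt, ?_⟩
        rw [hπ]
        exact he
  · -- PhiNet y = w
    funext j
    obtain ⟨m, hm, hLm⟩ := List.getElem_of_mem (hmemL j)
    have hval' := hval m hm
    rw [hLm] at hval'
    have hPhi : PhiNet path ρ H y j = ∑ k ∈ Finset.univ.filter (fun k => j ∈ path k),
        ρ k j * max (H k (y j) - cval path H y k j) 0 := rfl
    rw [hPhi]
    have hsub : avail path (L.take m) j ⊆ Finset.univ.filter (fun k => j ∈ path k) :=
      fun k hk => Finset.mem_filter.mpr ⟨Finset.mem_univ _, (mem_avail.mp hk).1⟩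
    have hzero' : ∀ k ∈ Finset.univ.filter (fun k => j ∈ path k),
        k ∉ avail path (L.take m) j → ρ k j * max (H k (y j) - cval path H y k j) 0 = 0 := by
      intro k hk hk2
      have hkpath : j ∈ path k := (Finset.mem_filter.mp hk).2
      have hex : ∃ i ∈ priorStations path k j, i ∉ L.take m := by
        by_contra hcon
        push_neg at hcon
        exact hk2 (mem_avail.mpr ⟨hkpath, hcon⟩)
      obtain ⟨i, hi, hiT⟩ := hex
      obtain ⟨m'', hm'', hLm''⟩ := List.getElem_of_mem (hmemL i)
      have hne2 : i ≠ j := mem_prior_ne path k hi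
      have hmm : m < m'' := by
        rcases Nat.lt_trichotomy m'' m with h | h | h
        · exfalso
          apply hiT
          rw [← hLm'']
          have e3 : (L.take m)[m'']'(by rw [List.length_take]; omega) = L[m''] :=
            List.getElem_take ..
          rw [← e3]
          exact List.getElem_mem _
        · exfalso
          subst h
          exact hne2 (hLm''.symm.trans hLm)
        · exact h
      have hyy : y i ≤ y j := by
        rw [← hLm'', ← hLm]
        exact hord m m'' hm hm'' hmm.le
      have hpne : (priorStations path k j).Nonempty := ⟨i, hi⟩
      have hle2 : (priorStations path k j).inf' hpne y ≤ y j := (Finset.inf'_le y hi).trans hyy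
      have h4 : H k (y j) - cval path H y k j ≤ 0 := by
        rw [cval_of_nonempty path H y k j hpne]
        have := hanti k hle2
        linarith
      rw [max_eq_right h4, mul_zero]
    rw [← Finset.sum_subset hsub hzero']
    exact hval'
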